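/- For real matrices A, B ∈ ℝ^{n×k}, the following are equivalent: (1) A·Aᵀ = B·Bᵀ; (2) there exists an orthogonal matrix R ∈ ℝ^{k×k} (RᵀR = R Rᵀ = I) such that A·R = B. -/

import Mathlib

open Matrix RealInnerProductSpace

noncomputable section

private lemma toEuclideanLin_mul {m k l : ℕ} (X : Matrix (Fin m) (Fin k) ℝ)
    (Y : Matrix (Fin k) (Fin l) ℝ) :
    Matrix.toEuclideanLin (X * Y) =
      (Matrix.toEuclideanLin X).comp (Matrix.toEuclideanLin Y) := by
  apply LinearMap.ext
  intro x
  simp [Matrix.toEuclideanLin_apply, Matrix.mulVec_mulVec]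

private lemma toEuclideanLin_one {k : ℕ} :
    Matrix.toEuclideanLin (1 : Matrix (Fin k) (Fin k) ℝ) = LinearMap.id := by
  apply LinearMap.ext
  intro x
  simp [Matrix.toEuclideanLin_apply]

/-- For real matrices `A, B ∈ ℝ^{n×k}`, `A·Aᵀ = B·Bᵀ` iff there is an orthogonal
matrix `R ∈ ℝ^{k×k}` with `A·R = B`. -/
theorem orth_column_equivalence {n k : ℕ} (A B : Matrix (Fin n) (Fin k) ℝ) :
    A * Aᵀ = B * Bᵀ ↔
      ∃ R : Matrix (Fin k) (Fin k) ℝ, R * Rᵀ = 1 ∧ Rᵀ * R = 1 ∧ A * R = B := by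
  constructor
  · intro h
    -- work in Euclidean space
    set α := Matrix.toEuclideanLin Aᵀ with hα
    set β := Matrix.toEuclideanLin Bᵀ with hβ
    -- key: equal norms
    have hdot : ∀ (C : Matrix (Fin n) (Fin k) ℝ) (v : Fin n → ℝ),
        dotProduct (Cᵀ *ᵥ v) (Cᵀ *ᵥ v) = dotProduct v ((C * Cᵀ) *ᵥ v) := by
      intro C v
      rw [← Matrix.mulVec_mulVec, Matrix.dotProduct_mulVec v C, ← Matrix.mulVec_transpose]
    have hinner : ∀ x : EuclideanSpace ℝ (Fin n), ⟪α x, α x⟫ = ⟪β x, β x⟫ := by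
      intro x
      simp only [hα, hβ, Matrix.toEuclideanLin_apply, EuclideanSpace.inner_toLp_toLp,
        star_trivial]
      rw [hdot A, hdot B, h]
    have hnorm : ∀ x : EuclideanSpace ℝ (Fin n), ‖α x‖ = ‖β x‖ := by
      intro x
      rw [norm_eq_sqrt_real_inner, norm_eq_sqrt_real_inner, hinner x]
    -- kernel inclusion
    have hker : LinearMap.ker α ≤ LinearMap.ker β := by
      intro x hx
      rw [LinearMap.mem_ker] at hx ⊢
      have := hnorm x
      rw [hx, norm_zero] at this
      exact norm_eq_zero.mp this.symm
    -- the isometry on the range of α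
    let e := α.quotKerEquivRange
    let L0 : ↥(LinearMap.range α) →ₗ[ℝ] EuclideanSpace ℝ (Fin k) :=
      ((LinearMap.ker α).liftQ β hker).comp e.symm.toLinearMap
    have hL0 : ∀ x : EuclideanSpace ℝ (Fin n),
        L0 ⟨α x, LinearMap.mem_range_self α x⟩ = β x := by
      intro x
      have h1 : e.symm ⟨α x, LinearMap.mem_range_self α x⟩ = (LinearMap.ker α).mkQ x :=
        α.quotKerEquivRange_symm_apply_image x _
      simp only [L0, LinearMap.comp_apply, LinearEquiv.coe_coe, h1]
      exact Submodule.liftQ_apply _ β x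
    have hL0norm : ∀ v : ↥(LinearMap.range α), ‖L0 v‖ = ‖v‖ := by
      rintro ⟨v, x, rfl⟩
      rw [hL0 x]
      exact (hnorm x).symm
    let L : ↥(LinearMap.range α) →ₗᵢ[ℝ] EuclideanSpace ℝ (Fin k) := ⟨L0, hL0norm⟩
    let U := L.extend
    have hU : ∀ x : EuclideanSpace ℝ (Fin n), U (α x) = β x := by
      intro x
      have := L.extend_apply ⟨α x, LinearMap.mem_range_self α x⟩
      rw [this]
      exact hL0 x
    -- the matrix of U
    let M := Matrix.toEuclideanLin.symm U.toLinearMap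
    have hM : Matrix.toEuclideanLin M = U.toLinearMap := Matrix.toEuclideanLin.apply_symm_apply _
    -- M * Aᵀ = Bᵀ
    have hMA : M * Aᵀ = Bᵀ := by
      apply Matrix.toEuclideanLin.injective
      rw [toEuclideanLin_mul, hM, ← hα, ← hβ]
      apply LinearMap.ext
      intro x
      exact hU x
    -- Mᵀ * M = 1
    have hadj : Matrix.toEuclideanLin Mᵀ = LinearMap.adjoint (Matrix.toEuclideanLin M) := by
      rw [← Matrix.conjTranspose_eq_transpose_of_trivial]
      exact Matrix.toEuclideanLin_conjTranspose_eq_adjoint M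
    have hMtM : Mᵀ * M = 1 := by
      apply Matrix.toEuclideanLin.injective
      rw [toEuclideanLin_mul, hadj, hM, toEuclideanLin_one]
      apply LinearMap.ext
      intro x
      apply ext_inner_left ℝ
      intro v
      rw [LinearMap.comp_apply, LinearMap.adjoint_inner_right]
      simp only [LinearIsometry.coe_toLinearMap, LinearMap.id_apply]
      exact U.inner_map_map v x
    have hMMt : M * Mᵀ = 1 := mul_eq_one_comm.mp hMtM
    refine ⟨Mᵀ, ?_, ?_, ?_⟩
    · rw [Matrix.transpose_transpose]; exact hMtM
    · rw [Matrix.transpose_transpose]; exact hMMt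
    · have := congrArg Matrix.transpose hMA
      rwa [Matrix.transpose_mul, Matrix.transpose_transpose] at this
  · rintro ⟨R, hR1, hR2, hAR⟩
    rw [← hAR, Matrix.transpose_mul, ← Matrix.mul_assoc, Matrix.mul_assoc A R,
      hR1, Matrix.mul_one]
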